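/- Decomposable loss closed-form for GW distance averaging: suppose the loss decomposes as L(a,b) = f₁(a) + f₂(b) − h₁(a)h₂(b), the blocks Γ^ℓ_{ij} ∈ S₊^d satisfy Σ_j Γ^ℓ_{ij} = P̄_i and Σ_i Γ^ℓ_{ij} = P^ℓ_j, and weights ω_ℓ ≥ 0 sum to 1. Then the objective Σ_ℓ ω_ℓ Σ_{i,i',j,j'} L(D_{i,i'}, D^ℓ_{j,j'}) tr(Γ^ℓ_{ij} Γ^ℓ_{i'j'}), viewed as a function of the symmetric nonnegative matrix D, has partial derivative with respect to D_{i,i'} equal to f₁'(D_{i,i'}) tr(P̄_i P̄_{i'}) − h₁'(D_{i,i'}) Σ_ℓ ω_ℓ tr(Σ_j Γ^ℓ_{ij} Σ_{j'} h₂(D^ℓ_{j,j'}) Γ^ℓ_{i',j'}); hence a stationary point satisfies f₁'(D_{i,i'})/h₁'(D_{i,i'}) = (Σ_ℓ ω_ℓ tr(Σ_j Γ^ℓ_{ij} Σ_{j'} h₂(D^ℓ_{j,j'}) Γ^ℓ_{i',j'})) / tr(P̄_i P̄_{i'}), provided tr(P̄_i P̄_{i'}) ≠ 0. -/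

import Mathlib

/-- Decomposable-loss closed form for Gromov–Wasserstein distance averaging:
derivative of the averaged objective with respect to the entry D_{i,i'} (here the
real variable t), and the resulting stationarity equation. -/
theorem stmt13 {d m nJ K : ℕ}
    (f₁ f₂ h₁ h₂ f₁' h₁' : ℝ → ℝ)
    (hf₁ : ∀ x, HasDerivAt f₁ (f₁' x) x) (hh₁ : ∀ x, HasDerivAt h₁ (h₁' x) x)
    (ω : Fin K → ℝ) (hω : ∀ ℓ, 0 ≤ ω ℓ) (hωs : ∑ ℓ, ω ℓ = 1)
    (D' : Fin K → Fin nJ → Fin nJ → ℝ)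
    (Pbar : Fin m → Matrix (Fin d) (Fin d) ℝ)
    (Pl : Fin K → Fin nJ → Matrix (Fin d) (Fin d) ℝ)
    (Γ : Fin K → Fin m → Fin nJ → Matrix (Fin d) (Fin d) ℝ)
    (hΓ : ∀ ℓ i j, (Γ ℓ i j).PosSemidef)
    (hrow : ∀ ℓ i, ∑ j, Γ ℓ i j = Pbar i)
    (hcol : ∀ ℓ j, ∑ i, Γ ℓ i j = Pl ℓ j)
    (i i' : Fin m) (t : ℝ) :
    HasDerivAt
      (fun s => ∑ ℓ, ω ℓ * ∑ j, ∑ j',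
        (f₁ s + f₂ (D' ℓ j j') - h₁ s * h₂ (D' ℓ j j')) * (Γ ℓ i j * Γ ℓ i' j').trace)
      (f₁' t * (Pbar i * Pbar i').trace -
        h₁' t * ∑ ℓ, ω ℓ * (∑ j, (Γ ℓ i j * ∑ j', h₂ (D' ℓ j j') • Γ ℓ i' j')).trace) t ∧
    ((f₁' t * (Pbar i * Pbar i').trace -
        h₁' t * ∑ ℓ, ω ℓ * (∑ j, (Γ ℓ i j * ∑ j', h₂ (D' ℓ j j') • Γ ℓ i' j')).trace = 0) →
      (Pbar i * Pbar i').trace ≠ 0 → h₁' t ≠ 0 →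
      f₁' t / h₁' t =
        (∑ ℓ, ω ℓ * (∑ j, (Γ ℓ i j * ∑ j', h₂ (D' ℓ j j') • Γ ℓ i' j')).trace) /
          (Pbar i * Pbar i').trace) := by
  set T : Fin K → Fin nJ → Fin nJ → ℝ := fun ℓ j j' => (Γ ℓ i j * Γ ℓ i' j').trace with hT
  have hA : ∀ ℓ, ∑ j, ∑ j', T ℓ j j' = (Pbar i * Pbar i').trace := by
    intro ℓ
    rw [← hrow ℓ i, ← hrow ℓ i', Finset.sum_mul_sum, Matrix.trace_sum]
    exact Finset.sum_congr rfl fun j _ => (Matrix.trace_sum _ _).symm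
  have hB : ∀ ℓ, (∑ j, (Γ ℓ i j * ∑ j', h₂ (D' ℓ j j') • Γ ℓ i' j')).trace
      = ∑ j, ∑ j', h₂ (D' ℓ j j') * T ℓ j j' := by
    intro ℓ
    rw [Matrix.trace_sum]
    refine Finset.sum_congr rfl fun j _ => ?_
    rw [Matrix.mul_sum, Matrix.trace_sum]
    refine Finset.sum_congr rfl fun j' _ => ?_
    rw [Matrix.mul_smul, Matrix.trace_smul]
    simp [hT, mul_comm]
  set A : ℝ := (Pbar i * Pbar i').trace with hAdef
  set B : ℝ := ∑ ℓ, ω ℓ * (∑ j, (Γ ℓ i j * ∑ j', h₂ (D' ℓ j j') • Γ ℓ i' j')).trace with hBdef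
  set C : ℝ := ∑ ℓ, ω ℓ * ∑ j, ∑ j', f₂ (D' ℓ j j') * T ℓ j j' with hCdef
  have hfun : ∀ s, (∑ ℓ, ω ℓ * ∑ j, ∑ j',
      (f₁ s + f₂ (D' ℓ j j') - h₁ s * h₂ (D' ℓ j j')) * T ℓ j j')
      = f₁ s * A + C - h₁ s * B := by
    intro s
    have key : ∀ ℓ ∈ (Finset.univ : Finset (Fin K)), ω ℓ * ∑ j, ∑ j',
        (f₁ s + f₂ (D' ℓ j j') - h₁ s * h₂ (D' ℓ j j')) * T ℓ j j'
        = ω ℓ * (f₁ s * A) + ω ℓ * (∑ j, ∑ j', f₂ (D' ℓ j j') * T ℓ j j')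
          - h₁ s * (ω ℓ * (∑ j, (Γ ℓ i j * ∑ j', h₂ (D' ℓ j j') • Γ ℓ i' j')).trace) := by
      intro ℓ _
      rw [hB ℓ, ← hA ℓ]
      simp only [Finset.mul_sum, ← Finset.sum_add_distrib, ← Finset.sum_sub_distrib]
      refine Finset.sum_congr rfl fun j _ => Finset.sum_congr rfl fun j' _ => by ring
    rw [Finset.sum_congr rfl key, Finset.sum_sub_distrib, Finset.sum_add_distrib,
      ← Finset.sum_mul, hωs, one_mul, ← Finset.mul_sum, hCdef, hBdef]
  constructor
  · have hderiv : HasDerivAt (fun s => f₁ s * A + C - h₁ s * B)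
        (f₁' t * A - h₁' t * B) t := by
      have := (((hf₁ t).mul_const A).add_const C).sub ((hh₁ t).mul_const B)
      exact this
    exact hderiv.congr_of_eventuallyEq (Filter.Eventually.of_forall fun s => (hfun s))
  · intro heq hAne hh₁ne
    field_simp
    nlinarith [heq]
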